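/- Let Λ be a row-finite k-graph with no sources, {t_λ, t_{μ*}} the universal Cohn Λ-family generating C_R(Λ), and for n ∈ ℤ^k let C_R(Λ)_n := span_R{t_λ t_{μ*} : λ, μ ∈ Λ, d(λ) - d(μ) = n}. Then C_R(Λ) = ⊕_{n ∈ ℤ^k} C_R(Λ)_n is a ℤ^k-grading: C_R(Λ)_m · C_R(Λ)_n ⊆ C_R(Λ)_{m+n}. -/

import Mathlib

/-- A higher-rank graph (`k`-graph): a small category with a degree functor to `ℕ^k`
satisfying the factorisation property.  Paths and vertices live in one type `Path`;
vertices are the paths of degree `0`. Composition is a total function which is only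
meaningful on composable pairs. -/
structure KGraph (k : ℕ) where
  Path : Type
  src : Path → Path
  rng : Path → Path
  comp : Path → Path → Path
  deg : Path → Fin k → ℕ
  deg_src : ∀ a, deg (src a) = 0
  deg_rng : ∀ a, deg (rng a) = 0
  src_vertex : ∀ a, deg a = 0 → src a = a
  rng_vertex : ∀ a, deg a = 0 → rng a = a
  comp_assoc : ∀ a b c, src a = rng b → src b = rng c →
    comp (comp a b) c = comp a (comp b c)
  rng_comp : ∀ a b, src a = rng b → rng (comp a b) = rng a
  src_comp : ∀ a b, src a = rng b → src (comp a b) = src b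
  deg_comp : ∀ a b, src a = rng b → deg (comp a b) = deg a + deg b
  comp_rng_self : ∀ a, comp (rng a) a = a
  comp_src_self : ∀ a, comp a (src a) = a
  factor : ∀ a (m n : Fin k → ℕ), deg a = m + n →
    ∃! p : Path × Path, src p.1 = rng p.2 ∧ comp p.1 p.2 = a ∧
      deg p.1 = m ∧ deg p.2 = n

namespace KGraph

variable {k : ℕ}

/-- `v` is a vertex iff it has degree `0`. -/
def IsVertex (Λ : KGraph k) (v : Λ.Path) : Prop := Λ.deg v = 0

/-- The set `vΛ¹` of edges (paths of degree `e_i` for some `i`) with range `v`. -/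
def edgesAt (Λ : KGraph k) (v : Λ.Path) : Set Λ.Path :=
  {e | Λ.rng e = v ∧ ∃ i : Fin k, Λ.deg e = Pi.single i 1}

/-- `Λ` is row-finite: each vertex receives finitely many edges. -/
def RowFinite (Λ : KGraph k) : Prop := ∀ v, (Λ.edgesAt v).Finite

/-- `Λ` has no sources: `vΛ^m ≠ ∅` for every vertex `v` and every `m ∈ ℕ^k`. -/
def NoSources (Λ : KGraph k) : Prop :=
  ∀ v, Λ.IsVertex v → ∀ m : Fin k → ℕ, ∃ a, Λ.rng a = v ∧ Λ.deg a = m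

/-- `MCE(l, m)`: minimal common extensions of `l` and `m`. -/
def MCE (Λ : KGraph k) (l m : Λ.Path) : Set Λ.Path :=
  {t | Λ.deg t = Λ.deg l ⊔ Λ.deg m ∧
    (∃ ν, Λ.src l = Λ.rng ν ∧ Λ.comp l ν = t) ∧
    (∃ γ, Λ.src m = Λ.rng γ ∧ Λ.comp m γ = t)}

/-- `Λ^min(l, m)`: pairs `(ν, γ)` with `lν = mγ ∈ MCE(l, m)`. -/
def MinPairs (Λ : KGraph k) (l m : Λ.Path) : Set (Λ.Path × Λ.Path) :=
  {p | Λ.src l = Λ.rng p.1 ∧ Λ.src m = Λ.rng p.2 ∧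
    Λ.comp l p.1 = Λ.comp m p.2 ∧ Λ.comp l p.1 ∈ Λ.MCE l m}

/-- `E ⊆ vΛ` is exhaustive if every path with range `v` has a common extension with
some member of `E`. -/
def IsExhaustive (Λ : KGraph k) (v : Λ.Path) (E : Set Λ.Path) : Prop :=
  ∀ a, Λ.rng a = v → ∃ μ ∈ E, (Λ.MinPairs a μ).Nonempty

end KGraph

/-- A Cohn `Λ`-family in a ring `A` : relations (CP1)–(CP3). -/
structure IsCohnFamily {k : ℕ} (Λ : KGraph k) (A : Type) [Ring A]
    (T Ts : Λ.Path → A) : Prop where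
  ghost_vertex : ∀ v, Λ.IsVertex v → Ts v = T v
  vertex_idem : ∀ v, Λ.IsVertex v → T v * T v = T v
  vertex_orth : ∀ v w, Λ.IsVertex v → Λ.IsVertex w → v ≠ w → T v * T w = 0
  mul_comp : ∀ a b, Λ.src a = Λ.rng b → T a * T b = T (Λ.comp a b)
  ghost_mul_comp : ∀ a b, Λ.src a = Λ.rng b → Ts b * Ts a = Ts (Λ.comp a b)
  cp3 : ∀ a b, Ts a * T b = ∑ᶠ p ∈ Λ.MinPairs a b, T p.1 * Ts p.2

/-- Product of the images of the elements of a finset, in some fixed enumeration.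
(The products we take are over pairwise-commuting factors, so the order is immaterial.) -/
noncomputable def listProd {A : Type} [Monoid A] {ι : Type} (s : Finset ι) (f : ι → A) : A :=
  (s.toList.map f).prod

/-- `F_{T,v} := T_v - ∏_{e ∈ vΛ¹} (T_v - T_e T_{e*})`. -/
noncomputable def FF {k : ℕ} (Λ : KGraph k) (hrf : Λ.RowFinite) {A : Type} [Ring A]
    (T Ts : Λ.Path → A) (v : Λ.Path) : A :=
  T v - listProd (hrf v).toFinset (fun e => T v - T e * Ts e)

section Aux

open Function in
/-- An injective additive monoid hom commutes with `finsum` over a set, regardless of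
finiteness of the support. -/
theorem addHom_finsum_mem {ι M N : Type*} [AddCommMonoid M] [AddCommMonoid N]
    (g : M →+ N) (hg : Function.Injective g) (S : Set ι) (f : ι → M) :
    g (∑ᶠ i ∈ S, f i) = ∑ᶠ i ∈ S, g (f i) := by
  rw [finsum_mem_def, finsum_mem_def, g.map_finsum_of_injective hg]
  refine finsum_congr fun i => ?_
  by_cases hi : i ∈ S <;> simp [hi]

end Aux


section Graded

variable {k : ℕ} (Λ : KGraph k) (R : Type) [CommRing R] (A : Type) [Ring A] [Algebra R A]
  (t ts : Λ.Path → A)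

/-- Degree of a path as an element of `ℤ^k`. -/
def degZ (a : Λ.Path) : Fin k → ℤ := fun i => (Λ.deg a i : ℤ)

/-- The `n`-th graded piece of the Cohn algebra. -/
noncomputable def gradePiece (n : Fin k → ℤ) : Submodule R A :=
  Submodule.span R {x | ∃ a b : Λ.Path, Λ.src a = Λ.src b ∧
    (fun i => (Λ.deg a i : ℤ) - (Λ.deg b i : ℤ)) = n ∧ x = t a * ts b}

variable {Λ R A t ts}

theorem t_mem_gradePiece (ht : IsCohnFamily Λ A t ts) (a : Λ.Path) :
    t a ∈ gradePiece Λ R A t ts (degZ Λ a) := by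
  apply Submodule.subset_span
  refine ⟨a, Λ.src a, (Λ.src_vertex (Λ.src a) (Λ.deg_src a)).symm, ?_, ?_⟩
  · funext i; rw [Λ.deg_src a]; simp [degZ]
  · have h1 : Λ.src a = Λ.rng (Λ.src a) := (Λ.rng_vertex _ (Λ.deg_src a)).symm
    rw [ht.ghost_vertex _ (Λ.deg_src a), ht.mul_comp a (Λ.src a) h1, Λ.comp_src_self]

theorem ts_mem_gradePiece (ht : IsCohnFamily Λ A t ts) (b : Λ.Path) :
    ts b ∈ gradePiece Λ R A t ts (-degZ Λ b) := by
  apply Submodule.subset_span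
  refine ⟨Λ.src b, b, Λ.src_vertex (Λ.src b) (Λ.deg_src b), ?_, ?_⟩
  · funext i; rw [Λ.deg_src b]; simp [degZ]
  · have h1 : Λ.src b = Λ.rng (Λ.src b) := (Λ.rng_vertex _ (Λ.deg_src b)).symm
    rw [← ht.ghost_vertex _ (Λ.deg_src b), ht.ghost_mul_comp b (Λ.src b) h1,
      Λ.comp_src_self]

/-- Multiplicativity of the grading. -/
theorem gradePiece_mul (ht : IsCohnFamily Λ A t ts) (m n : Fin k → ℤ) (x y : A)
    (hx : x ∈ gradePiece Λ R A t ts m) (hy : y ∈ gradePiece Λ R A t ts n) :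
    x * y ∈ gradePiece Λ R A t ts (m + n) := by
  classical
  induction hy using Submodule.span_induction with
  | mem y hy =>
    induction hx using Submodule.span_induction with
    | mem x hx =>
      obtain ⟨a, b, hab, hm, rfl⟩ := hx
      obtain ⟨c, e, hce, hn, rfl⟩ := hy
      have hassoc : (t a * ts b) * (t c * ts e) = t a * ((ts b * t c) * ts e) := by
        rw [mul_assoc, ← mul_assoc (ts b)]
      rw [hassoc, ht.cp3 b c]
      set f : Λ.Path × Λ.Path → A := fun p => t p.1 * ts p.2 with hfdef
      have hterm : ∀ p ∈ Λ.MinPairs b c,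
          t a * (f p * ts e) ∈ gradePiece Λ R A t ts (m + n) := by
        intro p hp
        obtain ⟨h1, h2, h3, -⟩ := hp
        have ha1 : Λ.src a = Λ.rng p.1 := hab.trans h1
        have he2 : Λ.src e = Λ.rng p.2 := hce.symm.trans h2
        apply Submodule.subset_span
        refine ⟨Λ.comp a p.1, Λ.comp e p.2, ?_, ?_, ?_⟩
        · rw [Λ.src_comp _ _ ha1, Λ.src_comp _ _ he2]
          have h4 := congrArg Λ.src h3
          rwa [Λ.src_comp _ _ h1, Λ.src_comp _ _ h2] at h4
        · have hdeg3 : Λ.deg b + Λ.deg p.1 = Λ.deg c + Λ.deg p.2 := by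
            rw [← Λ.deg_comp _ _ h1, h3, Λ.deg_comp _ _ h2]
          funext i
          have hmi := congrFun hm i
          have hni := congrFun hn i
          have h3i := congrFun hdeg3 i
          simp only [Pi.add_apply] at h3i ⊢
          rw [Λ.deg_comp _ _ ha1, Λ.deg_comp _ _ he2]
          simp only [Pi.add_apply] at hmi hni ⊢
          push_cast
          omega
        · show t a * (t p.1 * ts p.2 * ts e) = _
          rw [← mul_assoc (t a), ← mul_assoc (t a), mul_assoc (t a * t p.1),
            ht.mul_comp a p.1 ha1, ht.ghost_mul_comp e p.2 he2]
      by_cases hfin : (Λ.MinPairs b c ∩ Function.support f).Finite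
      · rw [finsum_mem_eq_sum f hfin, Finset.sum_mul, Finset.mul_sum]
        apply Submodule.sum_mem
        intro p hp
        exact hterm p (Set.Finite.mem_toFinset hfin |>.mp hp).1
      · have hz : ∑ᶠ p ∈ Λ.MinPairs b c, f p = 0 := by
          rw [finsum_mem_def]
          apply finsum_of_infinite_support
          rwa [Set.support_indicator]
        rw [hz, zero_mul, mul_zero]
        exact Submodule.zero_mem _
    | zero => rw [zero_mul]; exact Submodule.zero_mem _
    | add x₁ x₂ hx₁ hx₂ ih₁ ih₂ => rw [add_mul]; exact Submodule.add_mem _ ih₁ ih₂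
    | smul r x hx ih => rw [smul_mul_assoc]; exact Submodule.smul_mem _ r ih
  | zero => rw [mul_zero]; exact Submodule.zero_mem _
  | add y₁ y₂ hy₁ hy₂ ih₁ ih₂ => rw [mul_add]; exact Submodule.add_mem _ ih₁ ih₂
  | smul r y hy ih => rw [mul_smul_comm]; exact Submodule.smul_mem _ r ih


variable (Λ t ts) in
/-- The twisted `T`-family in `AddMonoidAlgebra A (ℤ^k)`. -/
noncomputable def TB : Λ.Path → AddMonoidAlgebra A (Fin k → ℤ) :=
  fun a => AddMonoidAlgebra.single (degZ Λ a) (t a)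

variable (Λ t ts) in
/-- The twisted `T*`-family in `AddMonoidAlgebra A (ℤ^k)`. -/
noncomputable def TsB : Λ.Path → AddMonoidAlgebra A (Fin k → ℤ) :=
  fun a => AddMonoidAlgebra.single (-degZ Λ a) (ts a)

theorem degZ_vertex {v : Λ.Path} (hv : Λ.IsVertex v) : degZ Λ v = 0 := by
  funext i; simp [degZ, show Λ.deg v = 0 from hv]

theorem degZ_comp (a b : Λ.Path) (h : Λ.src a = Λ.rng b) :
    degZ Λ (Λ.comp a b) = degZ Λ a + degZ Λ b := by
  funext i; simp [degZ, Λ.deg_comp a b h]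

theorem cohn_TB (ht : IsCohnFamily Λ A t ts) :
    IsCohnFamily Λ (AddMonoidAlgebra A (Fin k → ℤ)) (TB Λ t) (TsB Λ ts) := by
  constructor
  · intro v hv
    show AddMonoidAlgebra.single _ _ = AddMonoidAlgebra.single _ _
    rw [degZ_vertex hv, neg_zero, ht.ghost_vertex v hv]
  · intro v hv
    show AddMonoidAlgebra.single _ _ * AddMonoidAlgebra.single _ _ = AddMonoidAlgebra.single _ _
    rw [AddMonoidAlgebra.single_mul_single, ht.vertex_idem v hv, degZ_vertex hv, add_zero]
  · intro v w hv hw hvw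
    show AddMonoidAlgebra.single _ _ * AddMonoidAlgebra.single _ _ = 0
    rw [AddMonoidAlgebra.single_mul_single, ht.vertex_orth v w hv hw hvw,
      AddMonoidAlgebra.single_zero]
  · intro a b h
    show AddMonoidAlgebra.single _ _ * AddMonoidAlgebra.single _ _ = AddMonoidAlgebra.single _ _
    rw [AddMonoidAlgebra.single_mul_single]
    congr 1
    · rw [degZ_comp a b h]
    · exact ht.mul_comp a b h
  · intro a b h
    show AddMonoidAlgebra.single _ _ * AddMonoidAlgebra.single _ _ = AddMonoidAlgebra.single _ _
    rw [AddMonoidAlgebra.single_mul_single]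
    congr 1
    · rw [degZ_comp a b h]; abel
    · exact ht.ghost_mul_comp a b h
  · intro a b
    show AddMonoidAlgebra.single _ _ * AddMonoidAlgebra.single _ _ = _
    rw [AddMonoidAlgebra.single_mul_single, ht.cp3 a b]
    have hsf : (AddMonoidAlgebra.single (-degZ Λ a + degZ Λ b)
          (∑ᶠ p ∈ Λ.MinPairs a b, t p.1 * ts p.2) : AddMonoidAlgebra A (Fin k → ℤ)) =
        ∑ᶠ p ∈ Λ.MinPairs a b,
          AddMonoidAlgebra.single (-degZ Λ a + degZ Λ b) (t p.1 * ts p.2) :=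
      addHom_finsum_mem (AddMonoidAlgebra.singleAddHom (-degZ Λ a + degZ Λ b))
        (fun x y h => Finsupp.single_injective (-degZ Λ a + degZ Λ b)
          (congrArg AddMonoidAlgebra.coeff h)) _ _
    rw [hsf]
    refine finsum_mem_congr rfl fun p hp => ?_
    obtain ⟨h1, h2, h3, -⟩ := hp
    show AddMonoidAlgebra.single _ _ = AddMonoidAlgebra.single _ _ * AddMonoidAlgebra.single _ _
    rw [AddMonoidAlgebra.single_mul_single]
    congr 1
    have hdeg3 : Λ.deg a + Λ.deg p.1 = Λ.deg b + Λ.deg p.2 := by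
      rw [← Λ.deg_comp _ _ h1, h3, Λ.deg_comp _ _ h2]
    funext i
    have h3i := congrFun hdeg3 i
    simp only [Pi.add_apply] at h3i
    simp only [Pi.add_apply, Pi.neg_apply, degZ]
    omega

theorem phi_gradePiece (φ : A →ₙₐ[R] AddMonoidAlgebra A (Fin k → ℤ))
    (hφt : ∀ a, φ (t a) = TB Λ t a) (hφts : ∀ a, φ (ts a) = TsB Λ ts a)
    (n : Fin k → ℤ) (x : A) (hx : x ∈ gradePiece Λ R A t ts n) :
    φ x = AddMonoidAlgebra.single n x := by
  induction hx using Submodule.span_induction with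
  | mem x hx =>
    obtain ⟨a, b, hab, hn, rfl⟩ := hx
    rw [map_mul, hφt, hφts]
    show AddMonoidAlgebra.single _ _ * AddMonoidAlgebra.single _ _ = _
    rw [AddMonoidAlgebra.single_mul_single]
    have hexp : degZ Λ a + -degZ Λ b = n := by
      rw [← hn]
      try (funext i; simp [degZ, sub_eq_add_neg])
    rw [hexp]
  | zero => simp
  | add x y hx hy ihx ihy =>
    rw [map_add, ihx, ihy]; exact (AddMonoidAlgebra.single_add n x y).symm
  | smul r x hx ih =>
    rw [map_smul, ih]; exact AddMonoidAlgebra.smul_single r n x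

end Graded
/-- Theorem: the universal Cohn path algebra `C_R(Λ)` of a row-finite `k`-graph with no
sources is `ℤ^k`-graded by the submodules
`C_R(Λ)_n = span_R {t_λ t_{μ*} : d(λ) - d(μ) = n}`: the algebra is the internal direct
sum of these submodules and `C_R(Λ)_m ⬝ C_R(Λ)_n ⊆ C_R(Λ)_{m+n}`. -/
theorem cohn_algebra_graded {k : ℕ} (Λ : KGraph k)
    (hrf : Λ.RowFinite) (hns : Λ.NoSources)
    (R : Type) [CommRing R] (A : Type) [Ring A] [Algebra R A]
    (t ts : Λ.Path → A) (ht : IsCohnFamily Λ A t ts)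
    -- `A` together with `t, ts` is the *universal* Cohn `Λ`-family:
    (huniv : ∀ (B : Type) [Ring B] [Algebra R B] (T Ts : Λ.Path → B),
      IsCohnFamily Λ B T Ts →
        ∃! φ : A →ₙₐ[R] B, (∀ a, φ (t a) = T a) ∧ (∀ a, φ (ts a) = Ts a))
    (hgen : NonUnitalAlgebra.adjoin R (Set.range t ∪ Set.range ts) = ⊤) :
    DirectSum.IsInternal (fun n : Fin k → ℤ =>
        Submodule.span R {x | ∃ a b : Λ.Path, Λ.src a = Λ.src b ∧
          (fun i => (Λ.deg a i : ℤ) - (Λ.deg b i : ℤ)) = n ∧ x = t a * ts b}) ∧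
      ∀ (m n : Fin k → ℤ) (x y : A),
        x ∈ Submodule.span R {x | ∃ a b : Λ.Path, Λ.src a = Λ.src b ∧
              (fun i => (Λ.deg a i : ℤ) - (Λ.deg b i : ℤ)) = m ∧ x = t a * ts b} →
        y ∈ Submodule.span R {x | ∃ a b : Λ.Path, Λ.src a = Λ.src b ∧
              (fun i => (Λ.deg a i : ℤ) - (Λ.deg b i : ℤ)) = n ∧ x = t a * ts b} →
        x * y ∈ Submodule.span R {x | ∃ a b : Λ.Path, Λ.src a = Λ.src b ∧
              (fun i => (Λ.deg a i : ℤ) - (Λ.deg b i : ℤ)) = m + n ∧ x = t a * ts b} := by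
  classical
  obtain ⟨φ, ⟨hφt, hφts⟩, -⟩ :=
    huniv (AddMonoidAlgebra A (Fin k → ℤ)) (TB Λ t) (TsB Λ ts) (cohn_TB ht)
  refine ⟨?_, fun m n x y hx hy => gradePiece_mul ht m n x y hx hy⟩
  show DirectSum.IsInternal (gradePiece Λ R A t ts)
  rw [DirectSum.isInternal_submodule_iff_iSupIndep_and_iSup_eq_top]
  constructor
  · -- independence of the graded pieces
    rw [iSupIndep_def]
    intro n
    rw [Submodule.disjoint_def]
    intro x hxn hxr
    have hx1 : φ x = AddMonoidAlgebra.single n x := phi_gradePiece φ hφt hφts n x hxn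
    have hx0 : (φ x).coeff n = 0 := by
      refine Submodule.iSup_induction (motive := fun z => (φ z).coeff n = 0)
        (fun j => ⨆ _ : j ≠ n, gradePiece Λ R A t ts j) hxr ?_ ?_ ?_
      · intro j z hz
        try dsimp only at hz ⊢
        by_cases hj : j = n
        · subst hj
          rw [iSup_neg (by simp)] at hz
          simp only [Submodule.mem_bot] at hz
          rw [hz, map_zero]
          simp
        · rw [iSup_pos hj] at hz
          rw [phi_gradePiece φ hφt hφts j z hz]
          exact Finsupp.single_eq_of_ne (Ne.symm hj)
      · show (φ 0).coeff n = 0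
        rw [map_zero]; simp
      · intro z w hz hw
        try dsimp only at hz hw ⊢
        rw [map_add]
        exact (Finsupp.add_apply (φ z).coeff (φ w).coeff n).trans (by rw [hz, hw, add_zero])
    rw [hx1] at hx0
    rwa [AddMonoidAlgebra.coeff_single, Finsupp.single_eq_same] at hx0
  · -- the pieces span everything
    have hmulU : ∀ x ∈ ⨆ j, gradePiece Λ R A t ts j, ∀ y ∈ ⨆ j, gradePiece Λ R A t ts j,
        x * y ∈ ⨆ j, gradePiece Λ R A t ts j := by
      intro x hx
      refine Submodule.iSup_induction
        (motive := fun x => ∀ y ∈ ⨆ j, gradePiece Λ R A t ts j,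
          x * y ∈ ⨆ j, gradePiece Λ R A t ts j)
        (gradePiece Λ R A t ts) hx ?_ ?_ ?_
      · intro mx x hxm
        try dsimp only
        intro y hy
        refine Submodule.iSup_induction
          (motive := fun y => x * y ∈ ⨆ j, gradePiece Λ R A t ts j)
          (gradePiece Λ R A t ts) hy ?_ ?_ ?_
        · intro ny y hyn
          try dsimp only
          exact Submodule.mem_iSup_of_mem (mx + ny) (gradePiece_mul ht _ _ _ _ hxm hyn)
        · show x * 0 ∈ _
          rw [mul_zero]; exact Submodule.zero_mem _
        · intro y₁ y₂ h₁ h₂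
          try dsimp only at h₁ h₂ ⊢
          rw [mul_add]; exact Submodule.add_mem _ h₁ h₂
      · try dsimp only
        intro y hy; rw [zero_mul]; exact Submodule.zero_mem _
      · intro x₁ x₂ h₁ h₂
        try dsimp only at h₁ h₂ ⊢
        intro y hy; rw [add_mul]; exact Submodule.add_mem _ (h₁ y hy) (h₂ y hy)
    have hW : NonUnitalAlgebra.adjoin R (Set.range t ∪ Set.range ts) ≤
        (⨆ j, gradePiece Λ R A t ts j).toNonUnitalSubalgebra
          (fun x y hx hy => hmulU x hx y hy) := by
      apply NonUnitalAlgebra.adjoin_le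
      rintro x (⟨a, rfl⟩ | ⟨a, rfl⟩)
      · exact Submodule.mem_iSup_of_mem _ (t_mem_gradePiece ht a)
      · exact Submodule.mem_iSup_of_mem _ (ts_mem_gradePiece ht a)
    rw [hgen] at hW
    rw [eq_top_iff]
    intro x _
    exact hW (show x ∈ (⊤ : NonUnitalSubalgebra R A) by trivial)
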